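/- Let G be the graph on vertices {u, v} ∪ N_u ∪ N_v where u is adjacent to v and to all vertices of N_u, v is adjacent to all vertices of N_v, N_u and N_v are disjoint, |N_u| >= 1, |N_v| >= 1, and deg(u) + deg(v) >= 5 (there may be arbitrary edges between N_u and N_v keeping G triangle-free). If u' ∈ N_u and v' ∈ N_v, then C = V(G) \ {u', v'} is an identifying code of G, of size deg(u) + deg(v) - 2 = ((deg(u)+deg(v)-2)/(deg(u)+deg(v)))·n where n = |V(G)|. -/
import Mathlib


open SimpleGraph

/-- The closed neighborhood of a vertex. -/
def cnbr {V : Type*} (G : SimpleGraph V) (v : V) : Set V := insert v (G.neighborSet v)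

/-- `C` is an identifying code of `G`: every vertex is dominated by `C` and the
closed-neighborhood traces on `C` are pairwise distinct. -/
def IsIdCode {V : Type*} (G : SimpleGraph V) (C : Set V) : Prop :=
  (∀ v, (cnbr G v ∩ C).Nonempty) ∧
  ∀ u v : V, cnbr G u ∩ C = cnbr G v ∩ C → u = v

/-- The minimum size of an identifying code of `G`. -/
noncomputable def gammaID {V : Type*} (G : SimpleGraph V) : ℕ :=
  sInf {n | ∃ C : Set V, IsIdCode G C ∧ C.ncard = n}

lemma mem_cnbr' {V : Type*} (G : SimpleGraph V) (a z : V) :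
    z ∈ cnbr G a ↔ z = a ∨ G.Adj a z := by
  simp [cnbr, SimpleGraph.mem_neighborSet]

lemma tri' {V : Type*} {G : SimpleGraph V} (htf : G.CliqueFree 3) {a b c : V}
    (h1 : G.Adj a b) (h2 : G.Adj a c) (h3 : G.Adj b c) : False := by
  classical
  exact htf {a, b, c} (SimpleGraph.is3Clique_triple_iff.mpr ⟨h1, h2, h3⟩)

/-- Auxiliary: a vertex `u'` removed from the code cannot share its trace with any other
vertex. -/
lemma aux_sep {V : Type*} {G : SimpleGraph V} {u v u' v' b : V}
    (htf : G.CliqueFree 3) (huv : G.Adj u v)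
    (hu' : u' ∈ G.neighborSet u \ {v}) (hv' : v' ∈ G.neighborSet v \ {u})
    (hb : b ≠ u')
    (hE : cnbr G u' ∩ ((Set.univ : Set V) \ {u', v'}) =
          cnbr G b ∩ ((Set.univ : Set V) \ {u', v'})) : False := by
  have hAuu' : G.Adj u u' := hu'.1
  have hAvv' : G.Adj v v' := hv'.1
  have hu'v : u' ≠ v := by simpa using hu'.2
  have hv'u : v' ≠ u := by simpa using hv'.2
  have huu' : u ≠ u' := hAuu'.ne
  have huv' : u ≠ v' := hv'u.symm
  have hvv' : v ≠ v' := hAvv'.ne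
  have hvu' : v ≠ u' := hu'v.symm
  have huC : u ∈ ((Set.univ : Set V) \ {u', v'}) := by
    simp [huu', huv']
  have hvC : v ∈ ((Set.univ : Set V) \ {u', v'}) := by
    simp [hvu', hvv']
  have hu_mem : u ∈ cnbr G u' ∩ ((Set.univ : Set V) \ {u', v'}) :=
    ⟨(mem_cnbr' G u' u).2 (Or.inr hAuu'.symm), huC⟩
  rw [hE] at hu_mem
  rcases (mem_cnbr' G b u).1 hu_mem.1 with hub | hbu
  · -- b = u
    subst hub
    have hv_mem : v ∈ cnbr G u ∩ ((Set.univ : Set V) \ {u', v'}) :=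
      ⟨(mem_cnbr' G u v).2 (Or.inr huv), hvC⟩
    rw [← hE] at hv_mem
    rcases (mem_cnbr' G u' v).1 hv_mem.1 with h | h
    · exact hvu' h
    · exact tri' htf hAuu' huv h
  · -- G.Adj b u
    by_cases hbv' : b = v'
    · subst hbv'
      exact tri' htf huv hbu.symm hAvv'
    · have hbC : b ∈ ((Set.univ : Set V) \ {u', v'}) := by
        simp [hb, hbv']
      have hb_mem : b ∈ cnbr G b ∩ ((Set.univ : Set V) \ {u', v'}) :=
        ⟨(mem_cnbr' G b b).2 (Or.inl rfl), hbC⟩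
      rw [← hE] at hb_mem
      rcases (mem_cnbr' G u' b).1 hb_mem.1 with h | h
      · exact hb h
      · exact tri' htf hAuu' hbu.symm h

/-- Auxiliary: the degenerate case where the traces of `u` and `v` coincide forces
small degrees. -/
lemma aux_deg {V : Type*} {G : SimpleGraph V} {u v u' v' : V}
    (htf : G.CliqueFree 3) (huv : G.Adj u v)
    (hu' : u' ∈ G.neighborSet u \ {v}) (hv' : v' ∈ G.neighborSet v \ {u})
    (hdeg : 5 ≤ (G.neighborSet u).ncard + (G.neighborSet v).ncard)
    (h1 : ∀ z, G.Adj u z → z ≠ v → z = u' ∨ z = v')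
    (h2 : ∀ z, G.Adj v z → z ≠ u → z = u' ∨ z = v') : False := by
  have hAuu' : G.Adj u u' := hu'.1
  have hAvv' : G.Adj v v' := hv'.1
  have hsu : G.neighborSet u ⊆ {v, u'} := by
    intro z hz
    by_cases hzv : z = v
    · simp [hzv]
    · rcases h1 z hz hzv with h | h
      · simp [h]
      · exact absurd (tri' htf huv (h ▸ hz) hAvv') (by simp)
  have hsv : G.neighborSet v ⊆ {u, v'} := by
    intro z hz
    by_cases hzu : z = u
    · simp [hzu]
    · rcases h2 z hz hzu with h | h
      · exact absurd (tri' htf huv hAuu' (h ▸ hz)) (by simp)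
      · simp [h]
  have b1 : (G.neighborSet u).ncard ≤ 2 := by
    calc (G.neighborSet u).ncard ≤ ({v, u'} : Set V).ncard :=
          Set.ncard_le_ncard hsu (Set.toFinite _)
      _ ≤ 2 := by
          have := Set.ncard_insert_le v ({u'} : Set V)
          simpa using this
  have b2 : (G.neighborSet v).ncard ≤ 2 := by
    calc (G.neighborSet v).ncard ≤ ({u, v'} : Set V).ncard :=
          Set.ncard_le_ncard hsv (Set.toFinite _)
      _ ≤ 2 := by
          have := Set.ncard_insert_le u ({v'} : Set V)
          simpa using this
  omega

theorem stmt_17 {V : Type*} [Fintype V] (G : SimpleGraph V) (u v : V)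
    (huv : G.Adj u v) (htf : G.CliqueFree 3)
    (hall : (Set.univ : Set V) = cnbr G u ∪ cnbr G v)
    (hNu : (G.neighborSet u \ {v}).Nonempty)
    (hNv : (G.neighborSet v \ {u}).Nonempty)
    (hdeg : 5 ≤ (G.neighborSet u).ncard + (G.neighborSet v).ncard)
    (u' v' : V) (hu' : u' ∈ G.neighborSet u \ {v}) (hv' : v' ∈ G.neighborSet v \ {u}) :
    IsIdCode G ((Set.univ : Set V) \ {u', v'}) ∧
    ((Set.univ : Set V) \ {u', v'}).ncard =
      (G.neighborSet u).ncard + (G.neighborSet v).ncard - 2 := by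
  have hAuu' : G.Adj u u' := hu'.1
  have hAvv' : G.Adj v v' := hv'.1
  have hu'v : u' ≠ v := by simpa using hu'.2
  have hv'u : v' ≠ u := by simpa using hv'.2
  have huu' : u ≠ u' := hAuu'.ne
  have huv' : u ≠ v' := hv'u.symm
  have hvv' : v ≠ v' := hAvv'.ne
  have hvu' : v ≠ u' := hu'v.symm
  have hu'v' : u' ≠ v' := by
    intro h
    exact tri' htf huv hAuu' (h ▸ hAvv')
  have huC : u ∈ ((Set.univ : Set V) \ {u', v'}) := by simp [huu', huv']
  have hvC : v ∈ ((Set.univ : Set V) \ {u', v'}) := by simp [hvu', hvv']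
  constructor
  · constructor
    · -- domination
      intro w
      by_cases hw1 : w = u'
      · exact ⟨u, (mem_cnbr' G w u).2 (Or.inr (hw1 ▸ hAuu'.symm)), huC⟩
      · by_cases hw2 : w = v'
        · exact ⟨v, (mem_cnbr' G w v).2 (Or.inr (hw2 ▸ hAvv'.symm)), hvC⟩
        · exact ⟨w, (mem_cnbr' G w w).2 (Or.inl rfl), by simp [hw1, hw2]⟩
    · -- separation
      intro a b hE
      by_contra hab
      by_cases ha1 : a = u'
      · rw [ha1] at hE hab
        exact aux_sep htf huv hu' hv' (fun h => hab h.symm) hE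
      · by_cases ha2 : a = v'
        · rw [ha2] at hE hab
          rw [Set.pair_comm u' v'] at hE
          exact aux_sep htf huv.symm hv' hu' (fun h => hab h.symm) hE
        · by_cases hb1 : b = u'
          · rw [hb1] at hE hab
            exact aux_sep htf huv hu' hv' hab hE.symm
          · by_cases hb2 : b = v'
            · rw [hb2] at hE hab
              rw [Set.pair_comm u' v'] at hE
              exact aux_sep htf huv.symm hv' hu' hab hE.symm
            · -- both a and b lie in the code
              have haC : a ∈ ((Set.univ : Set V) \ {u', v'}) := by simp [ha1, ha2]
              have hbC : b ∈ ((Set.univ : Set V) \ {u', v'}) := by simp [hb1, hb2]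
              have hadj : G.Adj a b := by
                have : a ∈ cnbr G a ∩ ((Set.univ : Set V) \ {u', v'}) :=
                  ⟨(mem_cnbr' G a a).2 (Or.inl rfl), haC⟩
                rw [hE] at this
                rcases (mem_cnbr' G b a).1 this.1 with h | h
                · exact absurd h hab
                · exact h.symm
              have hsub : ∀ z, G.Adj a z → z ≠ b → z = u' ∨ z = v' := by
                intro z hz hzb
                by_contra h
                push_neg at h
                have : z ∈ cnbr G a ∩ ((Set.univ : Set V) \ {u', v'}) :=
                  ⟨(mem_cnbr' G a z).2 (Or.inr hz), by simp [h.1, h.2]⟩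
                rw [hE] at this
                rcases (mem_cnbr' G b z).1 this.1 with h' | h'
                · exact hzb h'
                · exact tri' htf hadj hz h'
              have hsub' : ∀ z, G.Adj b z → z ≠ a → z = u' ∨ z = v' := by
                intro z hz hza
                by_contra h
                push_neg at h
                have : z ∈ cnbr G b ∩ ((Set.univ : Set V) \ {u', v'}) :=
                  ⟨(mem_cnbr' G b z).2 (Or.inr hz), by simp [h.1, h.2]⟩
                rw [← hE] at this
                rcases (mem_cnbr' G a z).1 this.1 with h' | h'
                · exact hza h'
                · exact tri' htf hadj.symm hz h'
              by_cases hau : a = u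
              · subst hau
                by_cases hbv : b = v
                · subst hbv
                  exact aux_deg htf huv hu' hv' hdeg hsub
                    (fun z hz hzu => hsub' z hz hzu)
                · rcases hsub v huv (fun h => hbv h.symm) with h | h
                  · exact hvu' h
                  · exact hvv' h
              · by_cases hbu : b = u
                · subst hbu
                  by_cases hav : a = v
                  · subst hav
                    exact aux_deg htf huv hu' hv' hdeg
                      (fun z hz hzv => hsub' z hz hzv)
                      (fun z hz hzu => hsub z hz hzu)
                  · rcases hsub' v huv (fun h => hav h.symm) with h | h
                    · exact hvu' h
                    · exact hvv' h
                · by_cases hav : a = v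
                  · subst hav
                    rcases hsub u huv.symm (fun h => hbu h.symm) with h | h
                    · exact huu' h
                    · exact huv' h
                  · by_cases hbv : b = v
                    · subst hbv
                      rcases hsub' u huv.symm (fun h => hau h.symm) with h | h
                      · exact huu' h
                      · exact huv' h
                    · -- a is neither u nor v, so a ∈ N(u) ∪ N(v)
                      have ha : a ∈ cnbr G u ∪ cnbr G v := by
                        rw [← hall]; trivial
                      rcases ha with h | h
                      · rcases (mem_cnbr' G u a).1 h with h' | h'
                        · exact hau h'
                        · rcases hsub u h'.symm (fun h'' => hbu h''.symm) with h'' | h''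
                          · exact huu' h''
                          · exact huv' h''
                      · rcases (mem_cnbr' G v a).1 h with h' | h'
                        · exact hav h'
                        · rcases hsub v h'.symm (fun h'' => hbv h''.symm) with h'' | h''
                          · exact hvu' h''
                          · exact hvv' h''
  · -- cardinality
    have h1 : (cnbr G u).ncard = (G.neighborSet u).ncard + 1 :=
      Set.ncard_insert_of_notMem (by simp) (Set.toFinite _)
    have h2 : (cnbr G v).ncard = (G.neighborSet v).ncard + 1 :=
      Set.ncard_insert_of_notMem (by simp) (Set.toFinite _)
    have hinter : cnbr G u ∩ cnbr G v = {u, v} := by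
      ext z
      simp only [Set.mem_inter_iff, mem_cnbr', Set.mem_insert_iff, Set.mem_singleton_iff]
      constructor
      · rintro ⟨hzu | hzu, hzv | hzv⟩
        · exact Or.inl hzu
        · exact Or.inl hzu
        · exact Or.inr hzv
        · exact absurd (tri' htf huv hzu hzv) (by simp)
      · rintro (rfl | rfl)
        · exact ⟨Or.inl rfl, Or.inr huv.symm⟩
        · exact ⟨Or.inr huv, Or.inl rfl⟩
    have huniv : (Set.univ : Set V).ncard =
        (G.neighborSet u).ncard + (G.neighborSet v).ncard := by
      have h := Set.ncard_union_add_ncard_inter (cnbr G u) (cnbr G v)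
        (Set.toFinite _) (Set.toFinite _)
      rw [← hall, hinter, Set.ncard_pair huv.ne, h1, h2] at h
      omega
    have hu'v' : u' ≠ v' := by
      intro h
      exact tri' htf huv hAuu' (h ▸ hAvv')
    have hdiff : ((Set.univ : Set V) \ {u', v'}).ncard =
        (Set.univ : Set V).ncard - 2 := by
      rw [Set.ncard_diff (Set.subset_univ _) (Set.toFinite _), Set.ncard_pair hu'v']
    rw [hdiff, huniv]
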